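/- arXiv:2008.06845 — 2 statements merged into one kernel-verified Lean document; each statement's English description precedes it below -/
import Mathlib

section
/- (Optimal intercept for the drifted LQR.) Fix a ∈ ℝ^d and K ∈ ℝ^{k×d} with A − BK invertible, and assume Γ := A Q^{-1} Aᵀ + B R^{-1} Bᵀ is invertible. For b ∈ ℝ^k set μ_{K,b} := −(A − BK)^{-1}(a + Bb) and J₂(K,b) := μ_{K,b}ᵀ (Q + Kᵀ R K) μ_{K,b} − 2 μ_{K,b}ᵀ Kᵀ R b + bᵀ R b. Then the intercept b^K := −( K Q^{-1} Aᵀ + R^{-1} Bᵀ ) Γ^{-1} a minimizes J₂(K,·) over ℝ^k, i.e. J₂(K,b) ≥ J₂(K,b^K) for all b ∈ ℝ^k, and the minimum value is J₂(K,b^K) = aᵀ Γ^{-1} a, which does not depend on K. -/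
open Matrix MeasureTheory

noncomputable section

attribute [local instance] Matrix.normedAddCommGroup Matrix.normedSpace

/-- A square real matrix is stable if every complex eigenvalue has strictly negative real part. -/
def IsStable {n : ℕ} (M : Matrix (Fin n) (Fin n) ℝ) : Prop :=
  ∀ z ∈ spectrum ℂ (M.map (algebraMap ℝ ℂ)), z.re < 0

/-- Stationary covariance `Σ_K = ∫₀^∞ exp((A-BK)τ) D Dᵀ exp((A-BK)ᵀ τ) dτ`. -/
def SigmaK {d k : ℕ} (A : Matrix (Fin d) (Fin d) ℝ) (B : Matrix (Fin d) (Fin k) ℝ)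
    (D : Matrix (Fin d) (Fin d) ℝ) (K : Matrix (Fin k) (Fin d) ℝ) :
    Matrix (Fin d) (Fin d) ℝ :=
  ∫ τ in Set.Ioi (0 : ℝ),
    NormedSpace.exp (τ • (A - B * K)) * (D * Dᵀ) * NormedSpace.exp (τ • (A - B * K)ᵀ)

/-- Value matrix `P_K = ∫₀^∞ exp((A-BK)ᵀ τ) (Q + Kᵀ R K) exp((A-BK) τ) dτ`. -/
def PmatK {d k : ℕ} (A : Matrix (Fin d) (Fin d) ℝ) (B : Matrix (Fin d) (Fin k) ℝ)
    (Q : Matrix (Fin d) (Fin d) ℝ) (R : Matrix (Fin k) (Fin k) ℝ)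
    (K : Matrix (Fin k) (Fin d) ℝ) : Matrix (Fin d) (Fin d) ℝ :=
  ∫ τ in Set.Ioi (0 : ℝ),
    NormedSpace.exp (τ • (A - B * K)ᵀ) * (Q + Kᵀ * R * K) * NormedSpace.exp (τ • (A - B * K))

/-- `E_K = R K - Bᵀ P_K`. -/
def EmatK {d k : ℕ} (A : Matrix (Fin d) (Fin d) ℝ) (B : Matrix (Fin d) (Fin k) ℝ)
    (Q : Matrix (Fin d) (Fin d) ℝ) (R : Matrix (Fin k) (Fin k) ℝ)
    (K : Matrix (Fin k) (Fin d) ℝ) : Matrix (Fin k) (Fin d) ℝ :=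
  R * K - Bᵀ * PmatK A B Q R K

/-- Ergodic cost `J(K) = tr((Q + Kᵀ R K) Σ_K)`. -/
def Jcost {d k : ℕ} (A : Matrix (Fin d) (Fin d) ℝ) (B : Matrix (Fin d) (Fin k) ℝ)
    (D : Matrix (Fin d) (Fin d) ℝ) (Q : Matrix (Fin d) (Fin d) ℝ)
    (R : Matrix (Fin k) (Fin k) ℝ) (K : Matrix (Fin k) (Fin d) ℝ) : ℝ :=
  Matrix.trace ((Q + Kᵀ * R * K) * SigmaK A B D K)

/-- Spectral norm (operator norm w.r.t. Euclidean norms) of a real matrix. -/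
def specNorm {m n : ℕ} (M : Matrix (Fin m) (Fin n) ℝ) : ℝ :=
  ‖LinearMap.toContinuousLinearMap (Matrix.toEuclideanLin M)‖

/-- Minimum singular value of a square real matrix. -/
def sigmaMin {n : ℕ} (M : Matrix (Fin n) (Fin n) ℝ) : ℝ :=
  sInf {r | ∃ x : EuclideanSpace ℝ (Fin n), ‖x‖ = 1 ∧ r = ‖Matrix.toEuclideanLin M x‖}

/-- Frobenius norm of a real matrix. -/
def frobNorm {m n : ℕ} (M : Matrix (Fin m) (Fin n) ℝ) : ℝ :=
  Real.sqrt (∑ i, ∑ j, (M i j) ^ 2)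

/-- Euclidean norm of a real vector. -/
def vecNorm {n : ℕ} (v : Fin n → ℝ) : ℝ :=
  Real.sqrt (∑ i, (v i) ^ 2)

/-- Stationary mean `μ_{K,b} = -(A - BK)⁻¹ (a + B b)` for the drifted LQR. -/
def muKb {d k : ℕ} (A : Matrix (Fin d) (Fin d) ℝ) (B : Matrix (Fin d) (Fin k) ℝ)
    (K : Matrix (Fin k) (Fin d) ℝ) (a : Fin d → ℝ) (b : Fin k → ℝ) : Fin d → ℝ :=
  -((A - B * K)⁻¹ *ᵥ (a + B *ᵥ b))

/-- `J₂(K,b) = μᵀ (Q + KᵀRK) μ - 2 μᵀ Kᵀ R b + bᵀ R b` with `μ = μ_{K,b}`. -/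
def J2cost {d k : ℕ} (A : Matrix (Fin d) (Fin d) ℝ) (B : Matrix (Fin d) (Fin k) ℝ)
    (Q : Matrix (Fin d) (Fin d) ℝ) (R : Matrix (Fin k) (Fin k) ℝ)
    (K : Matrix (Fin k) (Fin d) ℝ) (a : Fin d → ℝ) (b : Fin k → ℝ) : ℝ :=
  muKb A B K a b ⬝ᵥ ((Q + Kᵀ * R * K) *ᵥ muKb A B K a b) -
    2 * (muKb A B K a b ⬝ᵥ ((Kᵀ * R) *ᵥ b)) + b ⬝ᵥ (R *ᵥ b)


section AuxOptIntercept
variable {d k : ℕ}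

private lemma dp_transpose' {m n : ℕ} (M : Matrix (Fin m) (Fin n) ℝ)
    (v : Fin m → ℝ) (w : Fin n → ℝ) : v ⬝ᵥ M *ᵥ w = (Mᵀ *ᵥ v) ⬝ᵥ w := by
  rw [Matrix.dotProduct_mulVec, ← Matrix.mulVec_transpose]

private lemma inv_mulVec_cancel' {n : ℕ} (M : Matrix (Fin n) (Fin n) ℝ)
    (h : IsUnit M) (v : Fin n → ℝ) : M⁻¹ *ᵥ (M *ᵥ v) = v := by
  rw [Matrix.mulVec_mulVec, Matrix.nonsing_inv_mul _ ((Matrix.isUnit_iff_isUnit_det M).mp h),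
    Matrix.one_mulVec]

private lemma mulVec_inv_cancel' {n : ℕ} (M : Matrix (Fin n) (Fin n) ℝ)
    (h : IsUnit M) (v : Fin n → ℝ) : M *ᵥ (M⁻¹ *ᵥ v) = v := by
  rw [Matrix.mulVec_mulVec, Matrix.mul_nonsing_inv _ ((Matrix.isUnit_iff_isUnit_det M).mp h),
    Matrix.one_mulVec]

private lemma quad_min' (A : Matrix (Fin d) (Fin d) ℝ) (B : Matrix (Fin d) (Fin k) ℝ)
    (Q : Matrix (Fin d) (Fin d) ℝ) (R : Matrix (Fin k) (Fin k) ℝ)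
    (hQ : Q.PosSemidef) (hR : R.PosSemidef) (g : Fin d → ℝ)
    (x xs : Fin d → ℝ) (u us : Fin k → ℝ)
    (hcon : A *ᵥ x - B *ᵥ u = A *ᵥ xs - B *ᵥ us)
    (hQx : Q *ᵥ xs = -(Aᵀ *ᵥ g)) (hRu : R *ᵥ us = Bᵀ *ᵥ g) :
    xs ⬝ᵥ Q *ᵥ xs + us ⬝ᵥ R *ᵥ us ≤ x ⬝ᵥ Q *ᵥ x + u ⬝ᵥ R *ᵥ u := by
  have symQ : ∀ v w : Fin d → ℝ, v ⬝ᵥ Q *ᵥ w = w ⬝ᵥ Q *ᵥ v := by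
    intro v w
    rw [dp_transpose', (by simpa [Matrix.conjTranspose_eq_transpose_of_trivial] using hQ.1.eq : Qᵀ = Q),
      dotProduct_comm]
  have symR : ∀ v w : Fin k → ℝ, v ⬝ᵥ R *ᵥ w = w ⬝ᵥ R *ᵥ v := by
    intro v w
    rw [dp_transpose', (by simpa [Matrix.conjTranspose_eq_transpose_of_trivial] using hR.1.eq : Rᵀ = R),
      dotProduct_comm]
  have h1 : 0 ≤ (x - xs) ⬝ᵥ Q *ᵥ (x - xs) := hQ.dotProduct_mulVec_nonneg _
  have h2 : 0 ≤ (u - us) ⬝ᵥ R *ᵥ (u - us) := hR.dotProduct_mulVec_nonneg _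
  have e1 : (x - xs) ⬝ᵥ Q *ᵥ (x - xs)
      = x ⬝ᵥ Q *ᵥ x - 2 * (x ⬝ᵥ Q *ᵥ xs) + xs ⬝ᵥ Q *ᵥ xs := by
    rw [Matrix.mulVec_sub, sub_dotProduct, dotProduct_sub, dotProduct_sub,
      symQ xs x]
    ring
  have e2 : (u - us) ⬝ᵥ R *ᵥ (u - us)
      = u ⬝ᵥ R *ᵥ u - 2 * (u ⬝ᵥ R *ᵥ us) + us ⬝ᵥ R *ᵥ us := by
    rw [Matrix.mulVec_sub, sub_dotProduct, dotProduct_sub, dotProduct_sub,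
      symR us u]
    ring
  have hc : A *ᵥ (x - xs) = B *ᵥ (u - us) := by
    have h := hcon
    rw [sub_eq_sub_iff_sub_eq_sub] at h
    rw [Matrix.mulVec_sub, Matrix.mulVec_sub, h]
  have cross : (x - xs) ⬝ᵥ Q *ᵥ xs + (u - us) ⬝ᵥ R *ᵥ us = 0 := by
    rw [hQx, hRu, dotProduct_neg, dp_transpose' Aᵀ, dp_transpose' Bᵀ,
      Matrix.transpose_transpose, Matrix.transpose_transpose, hc]
    ring
  have cross2 : x ⬝ᵥ Q *ᵥ xs + u ⬝ᵥ R *ᵥ us = xs ⬝ᵥ Q *ᵥ xs + us ⬝ᵥ R *ᵥ us := by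
    rw [sub_dotProduct, sub_dotProduct] at cross
    linarith
  rw [e1] at h1; rw [e2] at h2
  linarith

private lemma J2_eq' (A : Matrix (Fin d) (Fin d) ℝ) (B : Matrix (Fin d) (Fin k) ℝ)
    (Q : Matrix (Fin d) (Fin d) ℝ) (R : Matrix (Fin k) (Fin k) ℝ)
    (K : Matrix (Fin k) (Fin d) ℝ) (a : Fin d → ℝ) (hR : R.PosDef) (b : Fin k → ℝ) :
    J2cost A B Q R K a b =
      muKb A B K a b ⬝ᵥ Q *ᵥ muKb A B K a b +
        (K *ᵥ muKb A B K a b - b) ⬝ᵥ R *ᵥ (K *ᵥ muKb A B K a b - b) := by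
  have symR : ∀ v w : Fin k → ℝ, v ⬝ᵥ R *ᵥ w = w ⬝ᵥ R *ᵥ v := by
    intro v w
    rw [dp_transpose', (by simpa [Matrix.conjTranspose_eq_transpose_of_trivial] using hR.isHermitian.eq : Rᵀ = R),
      dotProduct_comm]
  set μ := muKb A B K a b with hμ
  have t1 : μ ⬝ᵥ (Kᵀ * R * K) *ᵥ μ = (K *ᵥ μ) ⬝ᵥ R *ᵥ (K *ᵥ μ) := by
    rw [Matrix.mul_assoc, ← Matrix.mulVec_mulVec, dp_transpose', Matrix.transpose_transpose,
      ← Matrix.mulVec_mulVec]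
  have t2 : μ ⬝ᵥ (Kᵀ * R) *ᵥ b = (K *ᵥ μ) ⬝ᵥ R *ᵥ b := by
    rw [← Matrix.mulVec_mulVec, dp_transpose', Matrix.transpose_transpose]
  have t4 : (K *ᵥ μ - b) ⬝ᵥ R *ᵥ (K *ᵥ μ - b)
      = (K *ᵥ μ) ⬝ᵥ R *ᵥ (K *ᵥ μ) - 2 * ((K *ᵥ μ) ⬝ᵥ R *ᵥ b) + b ⬝ᵥ R *ᵥ b := by
    rw [Matrix.mulVec_sub, sub_dotProduct, dotProduct_sub, dotProduct_sub,
      symR b (K *ᵥ μ)]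
    ring
  unfold J2cost
  rw [← hμ, Matrix.add_mulVec, dotProduct_add, t1, t2, t4]
  ring

private lemma constr' (A : Matrix (Fin d) (Fin d) ℝ) (B : Matrix (Fin d) (Fin k) ℝ)
    (K : Matrix (Fin k) (Fin d) ℝ) (a : Fin d → ℝ) (hAK : IsUnit (A - B * K))
    (b : Fin k → ℝ) :
    A *ᵥ muKb A B K a b - B *ᵥ (K *ᵥ muKb A B K a b - b) = -a := by
  have h : (A - B * K) *ᵥ muKb A B K a b = -(a + B *ᵥ b) := by
    unfold muKb
    rw [Matrix.mulVec_neg, Matrix.mulVec_mulVec,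
      Matrix.mul_nonsing_inv _ ((Matrix.isUnit_iff_isUnit_det _).mp hAK), Matrix.one_mulVec]
  rw [Matrix.sub_mulVec] at h
  calc A *ᵥ muKb A B K a b - B *ᵥ (K *ᵥ muKb A B K a b - b)
      = (A *ᵥ muKb A B K a b - (B * K) *ᵥ muKb A B K a b) + B *ᵥ b := by
        rw [Matrix.mulVec_sub, Matrix.mulVec_mulVec]; abel
    _ = -(a + B *ᵥ b) + B *ᵥ b := by rw [h]
    _ = -a := by abel

end AuxOptIntercept

/-- Optimal intercept for the drifted LQR: with
`b^K = -(K Q⁻¹ Aᵀ + R⁻¹ Bᵀ) Γ⁻¹ a`, `J₂(K,b) ≥ J₂(K,b^K)` for all `b`, and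
`J₂(K,b^K) = aᵀ Γ⁻¹ a`, which does not depend on `K`. -/
theorem optimal_intercept {d k : ℕ} (hd : 0 < d) (hk : 0 < k)
    (A : Matrix (Fin d) (Fin d) ℝ) (B : Matrix (Fin d) (Fin k) ℝ)
    (Q : Matrix (Fin d) (Fin d) ℝ) (R : Matrix (Fin k) (Fin k) ℝ)
    (hQ : Q.PosDef) (hR : R.PosDef)
    (a : Fin d → ℝ) (K : Matrix (Fin k) (Fin d) ℝ)
    (hAK : IsUnit (A - B * K))
    (hΓ : IsUnit (A * Q⁻¹ * Aᵀ + B * R⁻¹ * Bᵀ)) :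
    (∀ b : Fin k → ℝ,
      J2cost A B Q R K a
        (-((K * Q⁻¹ * Aᵀ + R⁻¹ * Bᵀ) *ᵥ ((A * Q⁻¹ * Aᵀ + B * R⁻¹ * Bᵀ)⁻¹ *ᵥ a))) ≤
      J2cost A B Q R K a b) ∧
    J2cost A B Q R K a
        (-((K * Q⁻¹ * Aᵀ + R⁻¹ * Bᵀ) *ᵥ ((A * Q⁻¹ * Aᵀ + B * R⁻¹ * Bᵀ)⁻¹ *ᵥ a))) =
      a ⬝ᵥ ((A * Q⁻¹ * Aᵀ + B * R⁻¹ * Bᵀ)⁻¹ *ᵥ a) := by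
  set Γ : Matrix (Fin d) (Fin d) ℝ := A * Q⁻¹ * Aᵀ + B * R⁻¹ * Bᵀ with hΓdef
  set g : Fin d → ℝ := Γ⁻¹ *ᵥ a with hgdef
  set bK : Fin k → ℝ := -((K * Q⁻¹ * Aᵀ + R⁻¹ * Bᵀ) *ᵥ g) with hbKdef
  set p : Fin d → ℝ := Q⁻¹ *ᵥ (Aᵀ *ᵥ g) with hpdef
  set us : Fin k → ℝ := R⁻¹ *ᵥ (Bᵀ *ᵥ g) with husdef
  have hΓa : Γ *ᵥ g = a := mulVec_inv_cancel' Γ hΓ a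
  have hQxs : Q *ᵥ (-p) = -(Aᵀ *ᵥ g) := by
    rw [hpdef, Matrix.mulVec_neg, mulVec_inv_cancel' Q hQ.isUnit]
  have hRus : R *ᵥ us = Bᵀ *ᵥ g := mulVec_inv_cancel' R hR.isUnit _
  have ha : a + B *ᵥ bK = (A - B * K) *ᵥ p := by
    rw [hbKdef, hpdef, ← hΓa, hΓdef]
    simp only [Matrix.mulVec_neg, Matrix.mulVec_add, Matrix.mulVec_mulVec, Matrix.add_mulVec,
      Matrix.sub_mulVec, Matrix.mul_add, Matrix.mul_sub, Matrix.sub_mul, Matrix.add_mul,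
      Matrix.mul_assoc]
    abel
  have hxs : muKb A B K a bK = -p := by
    unfold muKb
    rw [ha, inv_mulVec_cancel' _ hAK]
  have hus : K *ᵥ (-p) - bK = us := by
    rw [hbKdef, hpdef, husdef]
    simp only [Matrix.mulVec_neg, Matrix.mulVec_add, Matrix.mulVec_mulVec, Matrix.add_mulVec,
      Matrix.mul_assoc, sub_neg_eq_add]
    abel
  have hval : (-p) ⬝ᵥ Q *ᵥ (-p) + us ⬝ᵥ R *ᵥ us = a ⬝ᵥ g := by
    rw [hQxs, hRus, neg_dotProduct, dotProduct_neg, neg_neg,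
      dotProduct_comm p, ← dp_transpose' A g p, dotProduct_comm us,
      ← dp_transpose' B g us, ← dotProduct_add]
    have hsum : A *ᵥ p + B *ᵥ us = a := by
      rw [← hΓa, hΓdef, hpdef, husdef]
      simp only [Matrix.mulVec_mulVec, Matrix.add_mulVec, Matrix.mul_assoc]
    rw [hsum, dotProduct_comm]
  constructor
  · intro b
    rw [J2_eq' A B Q R K a hR b, J2_eq' A B Q R K a hR bK, hxs, hus]
    refine quad_min' A B Q R hQ.posSemidef hR.posSemidef g _ _ _ _ ?_ hQxs hRus
    have c1 := constr' A B K a hAK b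
    have c2 := constr' A B K a hAK bK
    rw [hxs, hus] at c2
    rw [c1, c2]
  · rw [J2_eq' A B Q R K a hR bK, hxs, hus, hval]


end
end

section
/- Fix a ∈ ℝ^d and K ∈ ℝ^{k×d} with A − BK invertible, assume Γ := A Q^{-1} Aᵀ + B R^{-1} Bᵀ is invertible, and set b^K := −( K Q^{-1} Aᵀ + R^{-1} Bᵀ ) Γ^{-1} a. Then the corresponding stationary mean μ^K := −(A − BK)^{-1}(a + B b^K) satisfies μ^K = −Q^{-1} Aᵀ Γ^{-1} a; in particular μ^K does not depend on K. -/
open Matrix MeasureTheory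

noncomputable section

attribute [local instance] Matrix.normedAddCommGroup Matrix.normedSpace

/-- With `b^K = -(K Q⁻¹ Aᵀ + R⁻¹ Bᵀ) Γ⁻¹ a`, the stationary mean
`μ^K = -(A - BK)⁻¹ (a + B b^K)` equals `-Q⁻¹ Aᵀ Γ⁻¹ a`, independently of `K`. -/
theorem stationary_mean_independent_of_K {d k : ℕ} (hd : 0 < d) (hk : 0 < k)
    (A : Matrix (Fin d) (Fin d) ℝ) (B : Matrix (Fin d) (Fin k) ℝ)
    (Q : Matrix (Fin d) (Fin d) ℝ) (R : Matrix (Fin k) (Fin k) ℝ)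
    (hQ : Q.PosDef) (hR : R.PosDef)
    (a : Fin d → ℝ) (K : Matrix (Fin k) (Fin d) ℝ)
    (hAK : IsUnit (A - B * K))
    (hΓ : IsUnit (A * Q⁻¹ * Aᵀ + B * R⁻¹ * Bᵀ)) :
    -((A - B * K)⁻¹ *ᵥ
        (a + B *ᵥ
          (-((K * Q⁻¹ * Aᵀ + R⁻¹ * Bᵀ) *ᵥ ((A * Q⁻¹ * Aᵀ + B * R⁻¹ * Bᵀ)⁻¹ *ᵥ a))))) =
      -((Q⁻¹ * Aᵀ * (A * Q⁻¹ * Aᵀ + B * R⁻¹ * Bᵀ)⁻¹) *ᵥ a) := by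
  have hdet : IsUnit (A - B * K).det := (Matrix.isUnit_iff_isUnit_det _).1 hAK
  have hΓdet : IsUnit (A * Q⁻¹ * Aᵀ + B * R⁻¹ * Bᵀ).det :=
    (Matrix.isUnit_iff_isUnit_det _).1 hΓ
  have hΓinv : (A * Q⁻¹ * Aᵀ + B * R⁻¹ * Bᵀ) * (A * Q⁻¹ * Aᵀ + B * R⁻¹ * Bᵀ)⁻¹ = 1 :=
    Matrix.mul_nonsing_inv _ hΓdet
  set Γi := (A * Q⁻¹ * Aᵀ + B * R⁻¹ * Bᵀ)⁻¹ with hΓi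
  have h1 : (A - B * K) * (Q⁻¹ * Aᵀ * Γi) =
      1 - B * ((K * Q⁻¹ * Aᵀ + R⁻¹ * Bᵀ) * Γi) := by
    rw [eq_sub_iff_add_eq, ← hΓinv]
    simp only [Matrix.sub_mul, Matrix.mul_add, Matrix.add_mul, Matrix.mul_assoc]
    abel
  congr 1
  have hv : a + B *ᵥ (-((K * Q⁻¹ * Aᵀ + R⁻¹ * Bᵀ) *ᵥ (Γi *ᵥ a))) =
      (A - B * K) *ᵥ ((Q⁻¹ * Aᵀ * Γi) *ᵥ a) := by
    simp only [Matrix.mulVec_mulVec]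
    rw [h1, Matrix.sub_mulVec, Matrix.one_mulVec, Matrix.mulVec_neg, Matrix.mulVec_mulVec,
      Matrix.mul_assoc]
    abel
  rw [hv, Matrix.mulVec_mulVec, Matrix.mulVec_mulVec, ← Matrix.mul_assoc,
    Matrix.nonsing_inv_mul _ hdet, Matrix.one_mul]

end
end
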